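/- Let Z be a compact Hausdorff topological space and let x, x' : Fin k → Z. Suppose that for every continuous function f : Z → ℝ, the multiset {f(x(1)), …, f(x(k))} equals the multiset {f(x'(1)), …, f(x'(k))} (i.e., the multiset image of f ∘ x over Fin k equals that of f ∘ x'). Then there exists a permutation σ of Fin k such that x(s) = x'(σ(s)) for all s ∈ Fin k. -/

import Mathlib

lemma perm_of_multiset_map_eq {α : Type*} : ∀ (k : ℕ) (f g : Fin k → α),
    Multiset.map f (Finset.univ : Finset (Fin k)).val
      = Multiset.map g (Finset.univ : Finset (Fin k)).val →
    ∃ σ : Equiv.Perm (Fin k), ∀ s, f s = g (σ s) := by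
  intro k
  induction k with
  | zero => exact fun f g _ => ⟨Equiv.refl _, fun s => s.elim0⟩
  | succ n ih =>
    intro f g hm
    have h0 : f 0 ∈ Multiset.map g (Finset.univ : Finset (Fin (n + 1))).val := by
      rw [← hm]
      exact Multiset.mem_map_of_mem _ (Finset.mem_val.mpr (Finset.mem_univ _))
    obtain ⟨j, -, hj⟩ := Multiset.mem_map.mp h0
    -- rewrite both sides as cons
    have hL : Multiset.map f (Finset.univ : Finset (Fin (n + 1))).val
        = f 0 ::ₘ Multiset.map (fun s : Fin n => f s.succ) (Finset.univ : Finset (Fin n)).val := by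
      rw [Fin.univ_succ, Finset.cons_val, Multiset.map_cons, Finset.map_val, Multiset.map_map]
      rfl
    have hR : Multiset.map g (Finset.univ : Finset (Fin (n + 1))).val
        = g j ::ₘ Multiset.map (fun s : Fin n => g (j.succAbove s))
            (Finset.univ : Finset (Fin n)).val := by
      rw [Fin.univ_succAbove n j, Finset.cons_val, Multiset.map_cons, Finset.map_val,
        Multiset.map_map]
      rfl
    have htail : Multiset.map (fun s : Fin n => f s.succ) (Finset.univ : Finset (Fin n)).val
        = Multiset.map (fun s : Fin n => g (j.succAbove s)) (Finset.univ : Finset (Fin n)).val := by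
      have := hm
      rw [hL, hR, hj] at this
      exact (Multiset.cons_inj_right _).mp this
    obtain ⟨σ', hσ'⟩ := ih _ _ htail
    refine ⟨(finSuccEquiv n).trans ((Equiv.optionCongr σ').trans (finSuccEquiv' j).symm), ?_⟩
    intro s
    induction s using Fin.cases with
    | zero => simpa using hj.symm
    | succ i => simpa using hσ' i
    
/-- If for every continuous `f : Z → ℝ` the multisets of values
`{f(x(s))}` and `{f(x'(s))}` (over `s ∈ Fin k`, with multiplicity) agree, then
`x` and `x'` agree up to a permutation of `Fin k`. -/
theorem stmt_8 (Z : Type*) [TopologicalSpace Z] [CompactSpace Z] [T2Space Z]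
    (k : ℕ) (x x' : Fin k → Z)
    (h : ∀ f : C(Z, ℝ),
      Multiset.map (fun s => f (x s)) (Finset.univ : Finset (Fin k)).val
        = Multiset.map (fun s => f (x' s)) (Finset.univ : Finset (Fin k)).val) :
    ∃ σ : Equiv.Perm (Fin k), ∀ s, x s = x' (σ s) := by
  classical
  apply perm_of_multiset_map_eq
  -- It suffices to show counts agree for every z
  ext z
  rw [Multiset.count_map, Multiset.count_map]
  -- build an Urysohn function separating z from the other values
  set S : Set Z := ((Set.range x ∪ Set.range x') \ {z}) with hS
  have hSfin : S.Finite := ((Set.finite_range x).union (Set.finite_range x')).diff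
  have hScl : IsClosed S := hSfin.isClosed
  have hzcl : IsClosed ({z} : Set Z) := isClosed_singleton
  have hdisj : Disjoint S ({z} : Set Z) := by
    simp [hS, Set.disjoint_singleton_right, Set.mem_diff]
  obtain ⟨f, hf0, hf1, -⟩ := exists_continuous_zero_one_of_isClosed hScl hzcl hdisj
  have key : ∀ (y : Fin k → Z), (∀ s, y s ∈ Set.range x ∪ Set.range x') →
      Multiset.card (Multiset.filter (fun a => z = y a) (Finset.univ : Finset (Fin k)).val)
        = Multiset.card (Multiset.filter (fun a => (1:ℝ) = f (y a)) (Finset.univ : Finset (Fin k)).val) := by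
    intro y hy
    congr 1
    apply Multiset.filter_congr
    intro s _
    constructor
    · intro hz; rw [← hz]; exact (hf1 rfl).symm
    · intro hfz
      by_contra hne
      have : y s ∈ S := ⟨hy s, fun hh => hne hh.symm⟩
      have := hf0 this
      simp only [Pi.zero_apply] at this
      rw [this] at hfz
      exact one_ne_zero hfz
  rw [key x (fun s => Or.inl ⟨s, rfl⟩), key x' (fun s => Or.inr ⟨s, rfl⟩)]
  have hc := h f
  rw [Multiset.ext] at hc
  have := hc 1
  rwa [Multiset.count_map, Multiset.count_map] at this
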